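/- Let P₁,…,Pₙ be pairwise distinct pure qubit states with n ≥ 2. Then either P₁,…,Pₙ are antidistinguishable, or there exists a pure qubit state P_{n+1} with P_{n+1} ≠ P_j for all j = 1,…,n such that P₁,…,Pₙ,P_{n+1} are antidistinguishable. That is, any finite set of pure qubit states is either antidistinguishable or can be made antidistinguishable by adding a single pure state. -/

import Mathlib

open Matrix BigOperators
open scoped ComplexOrder

/-- A pure qubit state: a rank-one orthogonal projection on ℂ². -/
def IsPureState (P : Matrix (Fin 2) (Fin 2) ℂ) : Prop :=
  P.IsHermitian ∧ P * P = P ∧ P.trace = 1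

/-- A POVM on ℂ² with outcomes 1,…,n. -/
def IsPOVM {n : ℕ} (M : Fin n → Matrix (Fin 2) (Fin 2) ℂ) : Prop :=
  (∀ j, (M j).PosSemidef) ∧ ∑ j, M j = 1

/-- Qubit states are antidistinguishable if some POVM excludes each with certainty,
with every outcome occurring for at least one state. -/
def Antidistinguishable {n : ℕ} (ρ : Fin n → Matrix (Fin 2) (Fin 2) ℂ) : Prop :=
  ∃ M : Fin n → Matrix (Fin 2) (Fin 2) ℂ, IsPOVM M ∧
    ∀ j, (ρ j * M j).trace = 0 ∧ ∑ k, (ρ k * M j).trace ≠ 0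

noncomputable section

def dot3 (u v : Fin 3 → ℝ) : ℝ := u 0 * v 0 + u 1 * v 1 + u 2 * v 2

def bloch (u : Fin 3 → ℝ) : Matrix (Fin 2) (Fin 2) ℂ :=
  !![((1 + u 2 : ℝ) : ℂ) / 2, ((u 0 : ℝ) : ℂ) / 2 - ((u 1 : ℝ) : ℂ) / 2 * Complex.I;
     ((u 0 : ℝ) : ℂ) / 2 + ((u 1 : ℝ) : ℂ) / 2 * Complex.I, ((1 - u 2 : ℝ) : ℂ) / 2]

lemma bloch_herm (u : Fin 3 → ℝ) : (bloch u).IsHermitian := by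
  unfold bloch
  ext i j
  fin_cases i <;> fin_cases j <;>
    simp [Matrix.conjTranspose_apply, Complex.ext_iff]

lemma bloch_trace (u : Fin 3 → ℝ) : (bloch u).trace = 1 := by
  simp [bloch, Matrix.trace_fin_two]
  ring

lemma bloch_sq (u : Fin 3 → ℝ) (hu : dot3 u u = 1) : bloch u * bloch u = bloch u := by
  have h : ((u 0 : ℂ))^2 + (u 1)^2 + (u 2)^2 = 1 := by
    have h2 := hu; unfold dot3 at h2
    have : ((u 0 * u 0 + u 1 * u 1 + u 2 * u 2 : ℝ) : ℂ) = ((1:ℝ):ℂ) := by rw [h2]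
    push_cast at this; linear_combination this
  unfold bloch
  rw [Matrix.mul_fin_two]
  have hI := Complex.I_sq
  ext i j
  fin_cases i <;> fin_cases j <;> simp <;>
    first
      | ring1
      | linear_combination (1/4) * h - ((u 1 : ℂ))^2/4 * hI

lemma bloch_pure (u : Fin 3 → ℝ) (hu : dot3 u u = 1) : IsPureState (bloch u) :=
  ⟨bloch_herm u, bloch_sq u hu, bloch_trace u⟩

lemma bloch_inj : Function.Injective bloch := by
  intro u v h
  have h00 := congrFun (congrFun h 0) 0
  have h10 := congrFun (congrFun h 1) 0
  simp [bloch, div_eq_div_iff, Complex.ext_iff] at h00 h10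
  funext i
  fin_cases i
  · exact h10.1
  · exact h10.2
  · exact h00

lemma pure_exists_bloch {P : Matrix (Fin 2) (Fin 2) ℂ} (hP : IsPureState P) :
    ∃ u : Fin 3 → ℝ, dot3 u u = 1 ∧ P = bloch u := by
  obtain ⟨hH, hsq, htr⟩ := hP
  set a : ℝ := (P 0 0).re with ha
  set p : ℝ := (P 1 0).re with hp
  set q : ℝ := (P 1 0).im with hq
  have h00 : P 0 0 = (a : ℂ) := (hH.coe_re_apply_self 0).symm
  have h11 : P 1 1 = ((1 - a : ℝ) : ℂ) := by
    have ht : P 0 0 + P 1 1 = 1 := by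
      have := htr; rwa [Matrix.trace_fin_two] at this
    push_cast
    rw [← ht, h00]; ring
  have h10 : P 1 0 = (p : ℂ) + (q : ℂ) * Complex.I := (Complex.re_add_im (P 1 0)).symm
  have h01 : P 0 1 = (p : ℂ) - (q : ℂ) * Complex.I := by
    rw [← hH.apply 0 1, h10]
    simp [Complex.ext_iff]
  have hkey : a * a + (p * p + q * q) = a := by
    have h2 := congrFun (congrFun hsq 0) 0
    rw [Matrix.mul_apply, Fin.sum_univ_two, h00, h01, h10] at h2
    have := congrArg Complex.re h2
    simp [Complex.ext_iff] at this
    push_cast at this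
    linarith [this]
  refine ⟨![2*p, 2*q, 2*a - 1], by unfold dot3; simp; nlinarith [hkey], ?_⟩
  ext i j
  fin_cases i <;> fin_cases j <;>
    simp [bloch, h00, h01, h10, h11] <;> push_cast <;> ring

lemma one_sub_bloch (u : Fin 3 → ℝ) : (1 : Matrix (Fin 2) (Fin 2) ℂ) - bloch u = bloch (-u) := by
  ext i j
  fin_cases i <;> fin_cases j <;>
    simp [bloch, Matrix.one_apply] <;> push_cast <;> ring

lemma bloch_psd (u : Fin 3 → ℝ) (hu : dot3 u u = 1) : (bloch u).PosSemidef := by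
  have h : bloch u = (bloch u)ᴴ * bloch u := by
    rw [(bloch_herm u).eq, bloch_sq u hu]
  rw [h]
  exact Matrix.posSemidef_conjTranspose_mul_self _

lemma psd_smul {A : Matrix (Fin 2) (Fin 2) ℂ} (hA : A.PosSemidef) {c : ℝ} (hc : 0 ≤ c) :
    ((c : ℂ) • A).PosSemidef := by
  constructor
  · rw [Matrix.IsHermitian, Matrix.conjTranspose_smul, hA.1.eq]
    congr 1
    simp
  · intro x
    exact (hA.smul (show (0 : ℂ) ≤ (c : ℂ) by exact_mod_cast hc)).2 x

lemma trace_bloch_mul (u v : Fin 3 → ℝ) :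
    (bloch u * bloch v).trace = (((1 + dot3 u v) / 2 : ℝ) : ℂ) := by
  rw [Matrix.trace_fin_two, Matrix.mul_apply, Matrix.mul_apply, Fin.sum_univ_two]
  unfold bloch dot3
  push_cast
  simp
  linear_combination (-(u 1 : ℂ) * (v 1) / 2) * Complex.I_sq

lemma sum_smul_bloch {m : ℕ} (c : Fin m → ℝ) (u : Fin m → Fin 3 → ℝ)
    (h2 : ∑ j, c j = 2) (h0 : ∀ i, ∑ j, c j * u j i = 0) :
    ∑ j, ((c j : ℝ) : ℂ) • bloch (u j) = 1 := by
  have hc2 : ∑ j, ((c j : ℝ) : ℂ) = 2 := by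
    rw [← Complex.ofReal_sum, h2]; norm_num
  have h0C : ∀ i, ∑ j, ((c j : ℝ) : ℂ) * ((u j i : ℝ) : ℂ) = 0 := by
    intro i
    have : ((∑ j, c j * u j i : ℝ) : ℂ) = 0 := by rw [h0 i]; norm_num
    rw [← this]
    push_cast
    ring
  ext i k
  fin_cases i <;> fin_cases k <;>
    simp only [Matrix.sum_apply, Matrix.smul_apply, bloch, Matrix.one_apply,
      Matrix.cons_val', Matrix.cons_val_zero, Matrix.cons_val_one, Matrix.head_cons,
      Matrix.head_fin_const, Matrix.of_apply, Matrix.empty_val', Matrix.cons_val_fin_one,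
      smul_eq_mul, Fin.isValue, if_true, ite_true, Fin.zero_eta, Fin.mk_one]
  · rw [Finset.sum_congr rfl (fun x _ => show (c x:ℂ) * (((1 + u x 2 : ℝ):ℂ)/2)
        = (c x:ℂ)/2 + ((c x:ℂ) * ((u x 2 : ℝ):ℂ))/2 by push_cast; ring),
      Finset.sum_add_distrib, ← Finset.sum_div, ← Finset.sum_div, hc2, h0C 2]
    norm_num
  · rw [Finset.sum_congr rfl (fun x _ => show (c x:ℂ) * (((u x 0:ℝ):ℂ)/2 - ((u x 1:ℝ):ℂ)/2 * Complex.I)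
        = ((c x:ℂ) * ((u x 0 : ℝ):ℂ))/2 - ((c x:ℂ) * ((u x 1 : ℝ):ℂ)) * (Complex.I/2) by ring),
      Finset.sum_sub_distrib, ← Finset.sum_div, ← Finset.sum_mul, h0C 0, h0C 1]
    norm_num
  · rw [Finset.sum_congr rfl (fun x _ => show (c x:ℂ) * (((u x 0:ℝ):ℂ)/2 + ((u x 1:ℝ):ℂ)/2 * Complex.I)
        = ((c x:ℂ) * ((u x 0 : ℝ):ℂ))/2 + ((c x:ℂ) * ((u x 1 : ℝ):ℂ)) * (Complex.I/2) by ring),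
      Finset.sum_add_distrib, ← Finset.sum_div, ← Finset.sum_mul, h0C 0, h0C 1]
    norm_num
  · rw [Finset.sum_congr rfl (fun x _ => show (c x:ℂ) * (((1 - u x 2 : ℝ):ℂ)/2)
        = (c x:ℂ)/2 - ((c x:ℂ) * ((u x 2 : ℝ):ℂ))/2 by push_cast; ring),
      Finset.sum_sub_distrib, ← Finset.sum_div, ← Finset.sum_div, hc2, h0C 2]
    norm_num

lemma dot3_le_one {u v : Fin 3 → ℝ} (hu : dot3 u u = 1) (hv : dot3 v v = 1) :
    dot3 u v ≤ 1 := by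
  unfold dot3 at *
  nlinarith [sq_nonneg (u 0 - v 0), sq_nonneg (u 1 - v 1), sq_nonneg (u 2 - v 2)]

lemma dot3_lt_one {u v : Fin 3 → ℝ} (hu : dot3 u u = 1) (hv : dot3 v v = 1)
    (hne : u ≠ v) : dot3 u v < 1 := by
  rcases lt_or_eq_of_le (dot3_le_one hu hv) with h | h
  · exact h
  · exfalso
    apply hne
    have h0 : (u 0 - v 0)^2 + (u 1 - v 1)^2 + (u 2 - v 2)^2 = 0 := by
      unfold dot3 at *; nlinarith
    have e0 : u 0 = v 0 := by nlinarith [sq_nonneg (u 0 - v 0), sq_nonneg (u 1 - v 1), sq_nonneg (u 2 - v 2)]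
    have e1 : u 1 = v 1 := by nlinarith [sq_nonneg (u 0 - v 0), sq_nonneg (u 1 - v 1), sq_nonneg (u 2 - v 2)]
    have e2 : u 2 = v 2 := by nlinarith [sq_nonneg (u 0 - v 0), sq_nonneg (u 1 - v 1), sq_nonneg (u 2 - v 2)]
    funext i
    fin_cases i <;> assumption

lemma dot3_neg (u : Fin 3 → ℝ) : dot3 (-u) (-u) = dot3 u u := by
  unfold dot3; simp

lemma trace_bloch_mul_one_sub (u v : Fin 3 → ℝ) :
    (bloch u * (1 - bloch v)).trace = (((1 - dot3 u v) / 2 : ℝ) : ℂ) := by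
  rw [mul_sub, mul_one, Matrix.trace_sub, bloch_trace, trace_bloch_mul]
  push_cast
  ring

lemma antidist_of_bloch {m : ℕ} (hm : 2 ≤ m) (u : Fin m → Fin 3 → ℝ)
    (hu : ∀ j, dot3 (u j) (u j) = 1) (huinj : Function.Injective u)
    (c : Fin m → ℝ) (hc : ∀ j, 0 < c j) (hsum : ∀ i, ∑ j, c j * u j i = 0) :
    Antidistinguishable (fun j => bloch (u j)) := by
  have hm0 : 0 < m := by omega
  set S := ∑ j, c j with hS
  have hSpos : 0 < S := Finset.sum_pos (fun j _ => hc j) ⟨⟨0, hm0⟩, Finset.mem_univ _⟩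
  set d : Fin m → ℝ := fun j => 2 / S * c j with hd
  have hdpos : ∀ j, 0 < d j := fun j => mul_pos (div_pos two_pos hSpos) (hc j)
  have hd2 : ∑ j, d j = 2 := by
    rw [hd, ← Finset.mul_sum, ← hS]
    field_simp
  have hd0 : ∀ i, ∑ j, d j * u j i = 0 := by
    intro i
    rw [hd]
    simp only [mul_assoc]
    rw [← Finset.mul_sum, hsum i, mul_zero]
  refine ⟨fun j => ((d j : ℝ) : ℂ) • (1 - bloch (u j)), ⟨?_, ?_⟩, ?_⟩
  · intro j
    show (((d j : ℝ) : ℂ) • ((1 : Matrix (Fin 2) (Fin 2) ℂ) - bloch (u j))).PosSemidef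
    rw [one_sub_bloch]
    exact psd_smul (bloch_psd _ (by rw [dot3_neg]; exact hu j)) (le_of_lt (hdpos j))
  · have : ∀ j : Fin m, ((d j : ℝ) : ℂ) • ((1 : Matrix (Fin 2) (Fin 2) ℂ) - bloch (u j))
        = ((d j : ℝ) : ℂ) • (1 : Matrix (Fin 2) (Fin 2) ℂ) - ((d j : ℝ) : ℂ) • bloch (u j) :=
      fun j => smul_sub _ _ _
    rw [Finset.sum_congr rfl (fun j _ => this j), Finset.sum_sub_distrib,
      sum_smul_bloch d u hd2 hd0, ← Finset.sum_smul]
    have h2 : (∑ j, ((d j : ℝ) : ℂ)) = 2 := by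
      rw [← Complex.ofReal_sum, hd2]; norm_num
    rw [h2]
    norm_num [two_smul]
  · intro j
    constructor
    · rw [Matrix.mul_smul, Matrix.trace_smul, trace_bloch_mul_one_sub, hu j]
      norm_num
    · have hterm : ∀ k, ((fun j => bloch (u j)) k * (((d j : ℝ) : ℂ) • (1 - bloch (u j)))).trace
          = ((d j : ℝ) : ℂ) * (((1 - dot3 (u k) (u j)) / 2 : ℝ) : ℂ) := by
        intro k
        rw [Matrix.mul_smul, Matrix.trace_smul, trace_bloch_mul_one_sub]
        simp [smul_eq_mul]
      rw [Finset.sum_congr rfl (fun k _ => hterm k), ← Finset.mul_sum, ← Complex.ofReal_sum]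
      apply mul_ne_zero
      · exact_mod_cast (hdpos j).ne'
      · rw [Complex.ofReal_ne_zero]
        have hpos : 0 < ∑ k, (1 - dot3 (u k) (u j)) / 2 := by
          apply Finset.sum_pos'
          · intro i _
            have := dot3_le_one (hu i) (hu j)
            linarith
          · have hm2 : (1 : ℕ) < m := by omega
            set k : Fin m := if j = ⟨0, hm0⟩ then ⟨1, hm2⟩ else ⟨0, hm0⟩ with hk
            have hkj : k ≠ j := by
              rw [hk]
              split_ifs with h
              · rw [h]
                intro hcon
                exact absurd (congrArg Fin.val hcon) (by simp)
              · exact fun hcon => h hcon.symm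
            refine ⟨k, Finset.mem_univ _, ?_⟩
            have := dot3_lt_one (hu k) (hu j) (fun hcon => hkj (huinj hcon))
            linarith
        exact hpos.ne'

lemma dot3_pos {w : Fin 3 → ℝ} (hw : ∃ i, w i ≠ 0) : 0 < dot3 w w := by
  obtain ⟨i, hi⟩ := hw
  have hcase : i = 0 ∨ i = 1 ∨ i = 2 := by fin_cases i <;> simp
  rcases hcase with h | h | h <;> subst h <;> unfold dot3 <;>
    nlinarith [mul_self_nonneg (w 0), mul_self_nonneg (w 1), mul_self_nonneg (w 2),
      mul_self_pos.mpr hi]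


/-- any finite family of pairwise distinct pure qubit states (n ≥ 2)
is either antidistinguishable or becomes antidistinguishable after adding a single
new pure qubit state. -/
theorem qubit_antidistinguishable_or_add_one {n : ℕ} (hn : 2 ≤ n)
    (P : Fin n → Matrix (Fin 2) (Fin 2) ℂ) (hP : ∀ j, IsPureState (P j))
    (hinj : Function.Injective P) :
    Antidistinguishable P ∨
      ∃ Q : Matrix (Fin 2) (Fin 2) ℂ, IsPureState Q ∧ (∀ j, Q ≠ P j) ∧
        Antidistinguishable (Fin.snoc P Q) := by
  choose u hu1 hu2 using fun j => pure_exists_bloch (hP j)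
  have hPu : P = fun j => bloch (u j) := funext hu2
  have huinj : Function.Injective u := fun a b h => hinj (by rw [hu2 a, hu2 b, h])
  by_cases hA : ∃ c : Fin n → ℝ, (∀ j, 0 < c j) ∧ ∀ i, ∑ j, c j * u j i = 0
  · left
    obtain ⟨c, hc, hc0⟩ := hA
    rw [hPu]
    exact antidist_of_bloch hn u hu1 huinj c hc (fun i => hc0 i)
  · right
    set s : Fin 3 → ℝ := fun i => ∑ j, u j i with hs
    -- s ≠ 0
    have hs0 : ∃ i, s i ≠ 0 := by
      by_contra hcon
      push_neg at hcon
      exact hA ⟨fun _ => 1, fun _ => one_pos, fun i => by simpa using hcon i⟩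
    -- there is k with u k not a multiple of s
    have hw : ∃ k, ∀ a : ℝ, u k ≠ fun i => a * s i := by
      by_contra hcon
      push_neg at hcon
      choose a ha using hcon
      obtain ⟨i0, hi0⟩ := hs0
      have hss : 0 < dot3 s s := dot3_pos ⟨i0, hi0⟩
      have hsq : ∀ k, a k ^ 2 * dot3 s s = 1 := by
        intro k
        have h1 := hu1 k
        rw [ha k] at h1
        unfold dot3 at h1 ⊢
        beta_reduce at h1
        nlinarith [h1]
      have hainj : Function.Injective a := by
        intro x y hxy
        apply huinj
        rw [ha x, ha y, hxy]
      have haa : ∀ k l : Fin n, a k = a l ∨ a k = -a l := by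
        intro k l
        have h1 := hsq k
        have h2 := hsq l
        have h3 : (a k - a l) * (a k + a l) = 0 := by nlinarith
        rcases mul_eq_zero.mp h3 with h | h
        · left; linarith
        · right; linarith
      set j0 : Fin n := ⟨0, by omega⟩ with hj0
      set j1 : Fin n := ⟨1, by omega⟩ with hj1
      have e01 : j0 ≠ j1 := by simp [hj0, hj1, Fin.ext_iff]
      have h01 : a j0 ≠ a j1 := fun h => e01 (hainj h)
      have ha1 : a j1 = -a j0 := by
        rcases haa j1 j0 with h | h
        · exact absurd h.symm h01
        · exact h
      rcases Nat.lt_or_ge n 3 with h3 | h3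
      · -- n = 2
        have huniv : (Finset.univ : Finset (Fin n)) = {j0, j1} := by
          ext x
          simp [hj0, hj1, Fin.ext_iff]
          omega
        apply hA
        refine ⟨fun _ => 1, fun _ => one_pos, fun i => ?_⟩
        rw [huniv, Finset.sum_pair e01, ha j0, ha j1, ha1]
        ring
      · set j2 : Fin n := ⟨2, by omega⟩ with hj2
        have e02 : j0 ≠ j2 := by simp [hj0, hj2, Fin.ext_iff]
        have e12 : j1 ≠ j2 := by simp [hj1, hj2, Fin.ext_iff]
        have h02 : a j0 ≠ a j2 := fun h => e02 (hainj h)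
        have h12 : a j1 ≠ a j2 := fun h => e12 (hainj h)
        rcases haa j2 j0 with h | h
        · exact h02 h.symm
        · apply h12
          rw [ha1, h]
    obtain ⟨k, hk⟩ := hw
    -- independence of s and u k
    have hindep : ∀ α β : ℝ, (∀ i, α * s i + β * u k i = 0) → α = 0 ∧ β = 0 := by
      intro α β hab
      by_cases hβ : β = 0
      · subst hβ
        obtain ⟨i0, hi0⟩ := hs0
        have := hab i0
        constructor
        · have : α * s i0 = 0 := by linarith [hab i0]
          rcases mul_eq_zero.mp this with h | h
          · exact h
          · exact absurd h hi0
        · rfl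
      · exfalso
        apply hk (-α / β)
        funext i
        have := hab i
        field_simp
        linarith [hab i]
    -- the perturbed sums s + t * u k
    set st : ℝ → Fin 3 → ℝ := fun t i => s i + t * u k i with hst
    have hstne : ∀ t : ℝ, ∃ i, st t i ≠ 0 := by
      intro t
      by_contra hcon
      push_neg at hcon
      have := hindep 1 t (fun i => by have := hcon i; rw [hst] at this; simpa using this)
      exact one_ne_zero this.1
    set q : ℝ → ℝ := fun t => Real.sqrt (dot3 (st t) (st t)) with hq
    have hqpos : ∀ t, 0 < q t := fun t => Real.sqrt_pos.mpr (dot3_pos (hstne t))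
    have hqsq : ∀ t, q t * q t = dot3 (st t) (st t) :=
      fun t => Real.mul_self_sqrt (le_of_lt (dot3_pos (hstne t)))
    set v : ℝ → Fin 3 → ℝ := fun t i => -(st t i) / q t with hv
    have hvunit : ∀ t, dot3 (v t) (v t) = 1 := by
      intro t
      have hq0 := (hqpos t).ne'
      have := hqsq t
      unfold dot3 at this ⊢
      rw [hv]
      field_simp
      linarith [this]
    have hvinj : ∀ t1 t2 : ℝ, 0 ≤ t1 → 0 ≤ t2 → v t1 = v t2 → t1 = t2 := by
      intro t1 t2 _ _ hveq
      have hq1 := (hqpos t1).ne'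
      have hq2 := (hqpos t2).ne'
      have hcomp : ∀ i, (q t2 - q t1) * s i + (q t2 * t1 - q t1 * t2) * u k i = 0 := by
        intro i
        have := congrFun hveq i
        rw [hv] at this
        simp only at this
        have h2 : q t2 * st t1 i = q t1 * st t2 i := by
          field_simp at this
          linarith [this]
        rw [hst] at h2
        simp only at h2
        nlinarith [h2]
      obtain ⟨hA1, hA2⟩ := hindep _ _ hcomp
      have hqq : q t1 = q t2 := by linarith
      have : q t1 * t1 = q t1 * t2 := by rw [hqq] at hA2 ⊢; linarith
      exact mul_left_cancel₀ hq1 this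
    -- choose t avoiding the forbidden directions
    have hpick : ∃ t0 : ℕ, t0 ≤ n ∧ ∀ j, v (t0 : ℝ) ≠ u j := by
      by_contra hcon
      push_neg at hcon
      have hcon' : ∀ b : Fin (n + 1), ∃ j, v ((b : ℕ) : ℝ) = u j := by
        intro b
        obtain ⟨j, hj⟩ := hcon b (by omega)
        exact ⟨j, hj⟩
      choose φ hφ using hcon'
      have hφinj : Function.Injective φ := by
        intro x y hxy
        have : v ((x : ℕ) : ℝ) = v ((y : ℕ) : ℝ) := by rw [hφ x, hφ y, hxy]
        have := hvinj _ _ (by positivity) (by positivity) this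
        have : (x : ℕ) = (y : ℕ) := by exact_mod_cast this
        exact Fin.ext this
      have := Fintype.card_le_of_injective φ hφinj
      simp at this
    obtain ⟨t0, _, hT⟩ := hpick
    set t : ℝ := (t0 : ℝ) with hτ
    have ht0 : 0 ≤ t := by positivity
    refine ⟨bloch (v t), bloch_pure _ (hvunit t), fun j => ?_, ?_⟩
    · rw [hu2 j]
      exact fun h => hT j (bloch_inj h)
    · -- antidistinguishability of the extended family
      set u' : Fin (n + 1) → Fin 3 → ℝ := Fin.snoc u (v t) with hu'
      set c' : Fin (n + 1) → ℝ := Fin.snoc (fun j => if j = k then 1 + t else 1) (q t) with hc'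
      have hgoal : Fin.snoc P (bloch (v t)) = fun j => bloch (u' j) := by
        funext j
        refine Fin.lastCases ?_ ?_ j
        · rw [hu']
          simp [Fin.snoc_last]
        · intro a
          rw [hu']
          simp [Fin.snoc_castSucc, hu2 a]
      rw [hgoal]
      apply antidist_of_bloch (by omega) u' ?_ ?_ c' ?_ ?_
      · intro j
        refine Fin.lastCases ?_ ?_ j
        · rw [hu']; simp [Fin.snoc_last]; exact hvunit t
        · intro a; rw [hu']; simp [Fin.snoc_castSucc]; exact hu1 a
      · have hcs : ∀ a : Fin n, u' a.castSucc = u a := fun a => by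
          rw [hu']; exact Fin.snoc_castSucc _ _ _
        have hls : u' (Fin.last n) = v t := by rw [hu']; exact Fin.snoc_last _ _
        intro x y hxy
        rcases Fin.eq_castSucc_or_eq_last x with ⟨a, rfl⟩ | rfl <;>
          rcases Fin.eq_castSucc_or_eq_last y with ⟨b, rfl⟩ | rfl
        · have hab : u a = u b := by rw [← hcs a, ← hcs b, hxy]
          rw [huinj hab]
        · rw [hcs a, hls] at hxy
          exact absurd hxy.symm (hT a)
        · rw [hcs b, hls] at hxy
          exact absurd hxy (hT b)
        · rfl
      · intro j
        refine Fin.lastCases ?_ ?_ j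
        · rw [hc']; simp [Fin.snoc_last]; exact hqpos t
        · intro a
          rw [hc']
          simp only [Fin.snoc_castSucc]
          split_ifs
          · linarith
          · exact one_pos
      · intro i
        rw [Fin.sum_univ_castSucc]
        have hlast : c' (Fin.last n) * u' (Fin.last n) i = -(st t i) := by
          rw [hc', hu']
          simp only [Fin.snoc_last]
          rw [hv]
          have hq0 : q t ≠ 0 := (hqpos t).ne'
          field_simp
        have hcast : ∀ a : Fin n, c' a.castSucc * u' a.castSucc i
            = u a i + (if a = k then t * u a i else 0) := by
          intro a
          rw [hc', hu']
          simp only [Fin.snoc_castSucc]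
          split_ifs <;> ring
        rw [hlast, Finset.sum_congr rfl (fun a _ => hcast a), Finset.sum_add_distrib,
          Finset.sum_ite_eq' Finset.univ k (fun a => t * u a i)]
        simp only [Finset.mem_univ, if_true]
        rw [hst]
        simp only
        have : ∑ a, u a i = s i := rfl
        rw [this]
        ring
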